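/- arXiv:1903.09859 — 2 statements merged into one kernel-verified Lean document; each statement's English description precedes it below -/
import Mathlib

section
/- Let τ > 0, ψ₀ ∈ (-π/2, π/2), K₁ : ℝ → ℝ continuous, nonnegative, supported in [-1,1] with ∫_{-1}^{1} K₁ = 1 and K₁ > 0 on (-1,1), and K₂ : ℝ → ℝ continuous, odd, supported in [-1,1] with ∫₀¹ K₂ = 1 and K₂ > 0 on (0,1). For ψ ∈ (-π/2, π/2) with ψ₀ − ψ ≠ ±π/2 and w ∈ ℝ define M(w,ψ) = -τ ∫_{-1}^{1} K₁(y) K̄₂(a(ψ) y + b(w,ψ)) dy, where a(ψ) = tan(ψ₀ − ψ), b(w,ψ) = w cos(ψ₀)/cos(ψ₀ − ψ), and K̄₂(y) = ∫_{-1}^{y} K₂. Then M(0, ψ₀) = τ and M(w,ψ) < τ for all (w,ψ) ≠ (0, ψ₀); that is, (0,ψ₀) is the unique maximizer of M. -/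
open Real Set intervalIntegral

private lemma aux_zero_at_right {f : ℝ → ℝ} (hf : Continuous f)
    (hs : ∀ x, x ∉ Set.Icc (-1 : ℝ) 1 → f x = 0) : f 1 = 0 := by
  have h1 : Filter.Tendsto f (nhdsWithin 1 (Set.Ioi 1)) (nhds (f 1)) :=
    (hf.tendsto 1).mono_left nhdsWithin_le_nhds
  have h2 : Filter.Tendsto f (nhdsWithin 1 (Set.Ioi 1)) (nhds 0) := by
    refine Filter.Tendsto.congr' ?_ tendsto_const_nhds
    filter_upwards [self_mem_nhdsWithin] with x hx
    exact (hs x (fun h => absurd h.2 (not_le.2 hx))).symm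
  exact tendsto_nhds_unique h1 h2

/-- Uniqueness of the maximizer `(0, ψ₀)` of the asymptotic contrast function
`M(w,ψ) = -τ ∫ K₁(y) K̄₂(a(ψ) y + b(w,ψ)) dy` of the rotated difference kernel
estimator. -/
theorem stmt_4 (τ ψ₀ : ℝ) (hτ : 0 < τ) (hψ₀ : ψ₀ ∈ Set.Ioo (-(π / 2)) (π / 2))
    (K₁ K₂ : ℝ → ℝ) (hK₁cont : Continuous K₁) (hK₁nonneg : ∀ x, 0 ≤ K₁ x)
    (hK₁supp : ∀ x, x ∉ Set.Icc (-1 : ℝ) 1 → K₁ x = 0)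
    (hK₁int : (∫ x in (-1 : ℝ)..1, K₁ x) = 1)
    (hK₁pos : ∀ x ∈ Set.Ioo (-1 : ℝ) 1, 0 < K₁ x)
    (hK₂cont : Continuous K₂) (hK₂odd : ∀ x, K₂ (-x) = -K₂ x)
    (hK₂supp : ∀ x, x ∉ Set.Icc (-1 : ℝ) 1 → K₂ x = 0)
    (hK₂int : (∫ x in (0 : ℝ)..1, K₂ x) = 1)
    (hK₂pos : ∀ x ∈ Set.Ioo (0 : ℝ) 1, 0 < K₂ x)
    (M : ℝ → ℝ → ℝ)
    (hM : ∀ w ψ, M w ψ =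
      -τ * ∫ y in (-1 : ℝ)..1, K₁ y *
        (∫ t in (-1 : ℝ)..(Real.tan (ψ₀ - ψ) * y + w * Real.cos ψ₀ / Real.cos (ψ₀ - ψ)),
          K₂ t)) :
    M 0 ψ₀ = τ ∧
    (∀ w ψ, ψ ∈ Set.Ioo (-(π / 2)) (π / 2) → ψ₀ - ψ ≠ π / 2 → ψ₀ - ψ ≠ -(π / 2) →
      (w, ψ) ≠ ((0 : ℝ), ψ₀) → M w ψ < τ) := by
  have hK₂i : ∀ a b : ℝ, IntervalIntegrable K₂ MeasureTheory.volume a b :=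
    fun a b => hK₂cont.intervalIntegrable a b
  have hK21 : K₂ 1 = 0 := aux_zero_at_right hK₂cont hK₂supp
  have hK20 : K₂ 0 = 0 := by have := hK₂odd 0; simp at this; linarith
  have hK₂nonneg : ∀ x : ℝ, 0 ≤ x → 0 ≤ K₂ x := by
    intro x hx
    rcases eq_or_lt_of_le hx with h | h
    · rw [← h]; exact le_of_eq hK20.symm
    rcases lt_trichotomy x 1 with h1 | h1 | h1
    · exact (hK₂pos x ⟨h, h1⟩).le
    · rw [h1]; exact le_of_eq hK21.symm
    · rw [hK₂supp x (fun hm => absurd hm.2 (not_le.2 h1))]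
  have hK₂nonpos : ∀ x : ℝ, x ≤ 0 → K₂ x ≤ 0 := by
    intro x hx
    have := hK₂odd (-x)
    simp only [neg_neg] at this
    have h2 := hK₂nonneg (-x) (by linarith)
    linarith
  have hK₂negneg : ∀ x ∈ Set.Ioo (-1 : ℝ) 0, K₂ x < 0 := by
    intro x hx
    have := hK₂odd (-x)
    simp only [neg_neg] at this
    have h2 := hK₂pos (-x) ⟨by linarith [hx.2], by linarith [hx.1]⟩
    linarith
  -- positivity of ∫_0^z K₂ for z ≠ 0
  have hphi : ∀ z : ℝ, z ≠ 0 → 0 < ∫ t in (0 : ℝ)..z, K₂ t := by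
    intro z hz
    rcases lt_or_gt_of_ne hz with hneg | hpos
    · rw [intervalIntegral.integral_symm]
      have hcz : z ≤ max z (-1) := le_max_left _ _
      have hc0 : max z (-1) < 0 := max_lt hneg (by norm_num)
      have hsplit : (∫ t in z..(0 : ℝ), K₂ t)
          = (∫ t in z..(max z (-1)), K₂ t) + ∫ t in (max z (-1))..(0 : ℝ), K₂ t :=
        (intervalIntegral.integral_add_adjacent_intervals (hK₂i _ _) (hK₂i _ _)).symm
      have h1 : (∫ t in z..(max z (-1)), K₂ t) ≤ 0 := by
        have h := intervalIntegral.integral_nonneg (μ := MeasureTheory.volume) (f := fun t => -K₂ t) hcz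
          (fun u hu => by simpa using hK₂nonpos u (le_trans hu.2 hc0.le))
        rw [intervalIntegral.integral_neg] at h
        linarith
      have h2 : (∫ t in (max z (-1))..(0 : ℝ), K₂ t) < 0 := by
        have h := intervalIntegral.intervalIntegral_pos_of_pos_on
          (f := fun t => -K₂ t) ((hK₂cont.neg).intervalIntegrable _ _)
          (fun x hx => by
            simpa using hK₂negneg x ⟨lt_of_le_of_lt (le_max_right z (-1)) hx.1, hx.2⟩) hc0
        rw [intervalIntegral.integral_neg] at h
        linarith
      rw [hsplit]
      linarith
    · have hdz : min z 1 ≤ z := min_le_left _ _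
      have hd0 : 0 < min z 1 := lt_min hpos (by norm_num)
      have hsplit : (∫ t in (0 : ℝ)..z, K₂ t)
          = (∫ t in (0 : ℝ)..(min z 1), K₂ t) + ∫ t in (min z 1)..z, K₂ t :=
        (intervalIntegral.integral_add_adjacent_intervals (hK₂i _ _) (hK₂i _ _)).symm
      have h1 : 0 < ∫ t in (0 : ℝ)..(min z 1), K₂ t :=
        intervalIntegral.intervalIntegral_pos_of_pos_on (hK₂i _ _)
          (fun x hx => hK₂pos x ⟨hx.1, lt_of_lt_of_le hx.2 (min_le_right z 1)⟩) hd0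
      have h2 : 0 ≤ ∫ t in (min z 1)..z, K₂ t :=
        intervalIntegral.integral_nonneg (μ := MeasureTheory.volume) hdz (fun u hu => hK₂nonneg u (le_trans hd0.le hu.1))
      rw [hsplit]; linarith
  -- the primitive at 0
  have hKb0 : (∫ t in (-1 : ℝ)..(0 : ℝ), K₂ t) = -1 := by
    have hodd : ∀ t : ℝ, K₂ t = -K₂ (-t) := by
      intro t; have := hK₂odd (-t); simp only [neg_neg] at this; linarith
    have h1 : (∫ t in (-1 : ℝ)..(0 : ℝ), K₂ t) = -∫ t in (-1 : ℝ)..(0 : ℝ), K₂ (-t) := by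
      rw [← intervalIntegral.integral_neg]
      exact intervalIntegral.integral_congr (fun t _ => hodd t)
    rw [h1, intervalIntegral.integral_comp_neg]
    norm_num [hK₂int]
  have hKbz : ∀ z : ℝ, (∫ t in (-1 : ℝ)..z, K₂ t) = -1 + ∫ t in (0 : ℝ)..z, K₂ t := by
    intro z
    have h := intervalIntegral.integral_add_adjacent_intervals (hK₂i (-1) 0) (hK₂i 0 z)
    rw [hKb0] at h
    linarith
  have hKbge : ∀ z : ℝ, -1 ≤ ∫ t in (-1 : ℝ)..z, K₂ t := by
    intro z
    rw [hKbz]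
    rcases eq_or_ne z 0 with h | h
    · simp [h]
    · linarith [hphi z h]
  have hKbgt : ∀ z : ℝ, z ≠ 0 → -1 < ∫ t in (-1 : ℝ)..z, K₂ t := by
    intro z hz; rw [hKbz]; linarith [hphi z hz]
  have hKbcont : Continuous fun z : ℝ => ∫ t in (-1 : ℝ)..z, K₂ t :=
    intervalIntegral.continuous_primitive hK₂i (-1)
  constructor
  · rw [hM]
    have hz : ∀ y : ℝ,
        Real.tan (ψ₀ - ψ₀) * y + 0 * Real.cos ψ₀ / Real.cos (ψ₀ - ψ₀) = 0 := by
      intro y; simp [sub_self, Real.tan_zero]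
    have : (∫ y in (-1 : ℝ)..1, K₁ y *
        (∫ t in (-1 : ℝ)..(Real.tan (ψ₀ - ψ₀) * y + 0 * Real.cos ψ₀ / Real.cos (ψ₀ - ψ₀)),
          K₂ t)) = ∫ y in (-1 : ℝ)..1, K₁ y * (-1) := by
      refine intervalIntegral.integral_congr (fun y _ => ?_)
      rw [hz y, hKb0]
    rw [this]
    simp only [mul_neg_one]
    rw [intervalIntegral.integral_neg, hK₁int]
    ring
  · intro w ψ hψ hne1 hne2 hne
    set a := Real.tan (ψ₀ - ψ) with ha
    set b := w * Real.cos ψ₀ / Real.cos (ψ₀ - ψ) with hb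
    have hab : a ≠ 0 ∨ b ≠ 0 := by
      by_cases hψeq : ψ = ψ₀
      · right
        subst hψeq
        have hw : w ≠ 0 := by
          intro h; exact hne (by rw [h])
        have hcos : 0 < Real.cos ψ := Real.cos_pos_of_mem_Ioo hψ
        rw [hb, sub_self, Real.cos_zero, div_one]
        exact mul_ne_zero hw hcos.ne'
      · left
        intro hta
        have hθ1 : -π < ψ₀ - ψ := by
          have := hψ₀.1; have := hψ.2; have := Real.pi_pos; linarith
        have hθ2 : ψ₀ - ψ < π := by
          have := hψ₀.2; have := hψ.1; have := Real.pi_pos; linarith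
        have hcos : Real.cos (ψ₀ - ψ) ≠ 0 := by
          intro h
          rw [Real.cos_eq_zero_iff] at h
          obtain ⟨n, hn⟩ := h
          have hpi := Real.pi_pos
          have hcase : n ≤ -2 ∨ n = -1 ∨ n = 0 ∨ 1 ≤ n := by omega
          rcases hcase with h0 | h0 | h0 | h0
          · have hle : (n : ℝ) ≤ -2 := by exact_mod_cast h0
            rw [hn] at hθ1
            nlinarith
          · exact hne2 (by rw [hn, h0]; push_cast; ring)
          · exact hne1 (by rw [hn, h0]; push_cast; ring)
          · have hge : (1 : ℝ) ≤ (n : ℝ) := by exact_mod_cast h0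
            rw [hn] at hθ2
            nlinarith
        have hsin : Real.sin (ψ₀ - ψ) = 0 := by
          rw [ha, Real.tan_eq_sin_div_cos, div_eq_zero_iff] at hta
          tauto
        rw [Real.sin_eq_zero_iff_of_lt_of_lt hθ1 hθ2] at hsin
        exact hψeq (by linarith [sub_eq_zero.mp hsin])
    obtain ⟨y₀, hy₀mem, hy₀⟩ : ∃ y₀ ∈ Set.Ioo (-1 : ℝ) 1, a * y₀ + b ≠ 0 := by
      by_cases hbz : b = 0
      · rcases hab with haa | hbb
        · exact ⟨1 / 2, by norm_num, by rw [hbz, add_zero]; exact mul_ne_zero haa (by norm_num)⟩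
        · exact absurd hbz hbb
      · exact ⟨0, by norm_num, by simpa using hbz⟩
    set g : ℝ → ℝ := fun y => K₁ y * ((∫ t in (-1 : ℝ)..(a * y + b), K₂ t) + 1) with hg
    have hgc : Continuous g := by
      apply hK₁cont.mul
      exact (hKbcont.comp ((continuous_const.mul continuous_id).add continuous_const)).add
        continuous_const
    have hgnn : ∀ y, 0 ≤ g y := fun y =>
      mul_nonneg (hK₁nonneg y) (by linarith [hKbge (a * y + b)])
    have hgy₀ : 0 < g y₀ :=
      mul_pos (hK₁pos y₀ hy₀mem) (by linarith [hKbgt (a * y₀ + b) hy₀])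
    have hU : IsOpen {y : ℝ | 0 < g y} := isOpen_lt continuous_const hgc
    obtain ⟨ε, hε, hball⟩ := Metric.isOpen_iff.1 hU y₀ hgy₀
    set c := max (-1 : ℝ) (y₀ - ε) with hc
    set d := min (1 : ℝ) (y₀ + ε) with hd
    have hc1 : (-1 : ℝ) ≤ c := le_max_left _ _
    have hcy : c < y₀ := max_lt hy₀mem.1 (by linarith)
    have hyd : y₀ < d := lt_min hy₀mem.2 (by linarith)
    have hd1 : d ≤ 1 := min_le_left _ _
    have hIoo : ∀ x ∈ Set.Ioo c d, 0 < g x := by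
      intro x hx
      apply hball
      rw [Metric.mem_ball, Real.dist_eq, abs_lt]
      have h1 := lt_of_lt_of_le hx.2 (min_le_right 1 (y₀ + ε))
      have h2 := lt_of_le_of_lt (le_max_right (-1 : ℝ) (y₀ - ε)) hx.1
      constructor <;> linarith
    have hmid : 0 < ∫ x in c..d, g x :=
      intervalIntegral.intervalIntegral_pos_of_pos_on (hgc.intervalIntegrable _ _)
        hIoo (hcy.trans hyd)
    have hleft : 0 ≤ ∫ x in (-1 : ℝ)..c, g x :=
      intervalIntegral.integral_nonneg (μ := MeasureTheory.volume) hc1 (fun u _ => hgnn u)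
    have hright : 0 ≤ ∫ x in d..(1 : ℝ), g x :=
      intervalIntegral.integral_nonneg (μ := MeasureTheory.volume) hd1 (fun u _ => hgnn u)
    have hsplit : (∫ y in (-1 : ℝ)..1, g y)
        = ((∫ y in (-1 : ℝ)..c, g y) + ∫ y in c..d, g y) + ∫ y in d..(1 : ℝ), g y := by
      rw [intervalIntegral.integral_add_adjacent_intervals (hgc.intervalIntegrable _ _)
        (hgc.intervalIntegrable _ _),
        intervalIntegral.integral_add_adjacent_intervals (hgc.intervalIntegrable _ _)
        (hgc.intervalIntegrable _ _)]
    have hI : 0 < ∫ y in (-1 : ℝ)..1, g y := by rw [hsplit]; linarith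
    have hrewrite : (∫ y in (-1 : ℝ)..1, K₁ y * (∫ t in (-1 : ℝ)..(a * y + b), K₂ t))
        = (∫ y in (-1 : ℝ)..1, g y) - 1 := by
      have heq : (∫ y in (-1 : ℝ)..1, K₁ y * (∫ t in (-1 : ℝ)..(a * y + b), K₂ t))
          = ∫ y in (-1 : ℝ)..1, (g y - K₁ y) := by
        refine intervalIntegral.integral_congr (fun y _ => ?_)
        simp only [hg]; ring
      rw [heq, intervalIntegral.integral_sub (hgc.intervalIntegrable _ _)
        (hK₁cont.intervalIntegrable _ _), hK₁int]
    rw [hM w ψ, ← ha, ← hb, hrewrite]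
    nlinarith [mul_pos hτ hI]
end

section
/- For any nonempty index set I, functions f_n, f : Θ × I → ℝ with Θ ⊆ ℝ^d compact, θ₀ : I → Θ, and estimators θ̂_n : I → Θ, suppose (i) sup_{(θ,x) ∈ Θ × I} |f_n(θ,x) − f(θ,x)| → 0, (ii) for every ε > 0, inf_{x ∈ I} [ f(θ₀(x),x) − sup_{θ : |θ − θ₀(x)| ≥ ε} f(θ,x) ] > 0, and (iii) inf_{x ∈ I} [ f_n(θ̂_n(x),x) − f_n(θ₀(x),x) ] ≥ −ε_n with ε_n → 0. Then sup_{x ∈ I} |θ̂_n(x) − θ₀(x)| → 0. -/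
open Set Filter Topology

/-- Deterministic core of uniform M-estimation consistency: uniform convergence of
criterion functions plus a uniformly well-separated maximum imply uniform convergence
of near-maximizers. -/
theorem stmt_12 {d : ℕ} {I : Type*} [Nonempty I]
    (Θ : Set (EuclideanSpace ℝ (Fin d))) (hΘ : IsCompact Θ)
    (f_n : ℕ → EuclideanSpace ℝ (Fin d) → I → ℝ)
    (f : EuclideanSpace ℝ (Fin d) → I → ℝ)
    (θ₀ : I → EuclideanSpace ℝ (Fin d)) (hθ₀ : ∀ x, θ₀ x ∈ Θ)
    (θhat : ℕ → I → EuclideanSpace ℝ (Fin d)) (hθhat : ∀ n x, θhat n x ∈ Θ)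
    (hunif : ∀ ε > 0, ∃ N : ℕ, ∀ n ≥ N, ∀ θ ∈ Θ, ∀ x : I,
      |f_n n θ x - f θ x| ≤ ε)
    (hsep : ∀ ε > 0, ∃ δ > 0, ∀ x : I, ∀ θ ∈ Θ,
      ε ≤ ‖θ - θ₀ x‖ → f θ x ≤ f (θ₀ x) x - δ)
    (ε_n : ℕ → ℝ) (hε_n : Filter.Tendsto ε_n Filter.atTop (nhds 0))
    (hmax : ∀ n : ℕ, ∀ x : I, f_n n (θ₀ x) x - ε_n n ≤ f_n n (θhat n x) x) :
    ∀ ε > 0, ∃ N : ℕ, ∀ n ≥ N, ∀ x : I, ‖θhat n x - θ₀ x‖ ≤ ε := by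
  intro ε hε
  obtain ⟨δ, hδ, hsep'⟩ := hsep ε hε
  obtain ⟨N₁, hN₁⟩ := hunif (δ / 4) (by linarith)
  obtain ⟨N₂, hN₂⟩ := (Metric.tendsto_atTop.mp hε_n) (δ / 4) (by linarith)
  refine ⟨max N₁ N₂, fun n hn x => ?_⟩
  have h1 := hN₁ n (le_trans (le_max_left _ _) hn) (θhat n x) (hθhat n x) x
  have h2 := hN₁ n (le_trans (le_max_left _ _) hn) (θ₀ x) (hθ₀ x) x
  have h3 : |ε_n n| < δ / 4 := by
    have := hN₂ n (le_trans (le_max_right _ _) hn)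
    simpa [Real.dist_eq] using this
  by_contra h
  push_neg at h
  have hs := hsep' x (θhat n x) (hθhat n x) h.le
  have hm := hmax n x
  rw [abs_lt] at h3
  rw [abs_le] at h1 h2
  linarith [h1.1, h1.2, h2.1, h2.2, h3.1, h3.2]
end
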